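/- arXiv:1011.0678 — 5 statements merged into one kernel-verified Lean document; each statement's English description precedes it below -/
import Mathlib

section
/- Let β : I → ℝ be a differentiable positive function on an interval I ⊆ (0,∞) and let c ∈ ℝ. If β(r)^{-3/4} · r^{9/2} · d/dr( β(r)/r² ) = −4c for all r ∈ I, then there exists b ∈ ℝ such that for all r ∈ I one has c/(2r²) + b > 0 and β(r) = r²·( c/(2r²) + b )⁴. -/
/-- Integration of the ODE of Case B of Appendix B: if `β` is a differentiable
positive function on an interval `I ⊆ (0,∞)` with
`β(r)^(−3/4)·r^(9/2)·(β/r²)' = −4c` on `I`, then there is a constant `b` with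
`c/(2r²) + b > 0` and `β(r) = r²·(c/(2r²) + b)⁴` on `I`. -/
theorem caseB_ode_integration
    (I : Set ℝ) (hI : I.OrdConnected) (hIsub : I ⊆ Set.Ioi 0)
    (β : ℝ → ℝ) (c : ℝ)
    (hβpos : ∀ r ∈ I, 0 < β r)
    (hβdiff : DifferentiableOn ℝ β I)
    (hode : ∀ r ∈ I,
      β r ^ (-(3 : ℝ) / 4) * r ^ ((9 : ℝ) / 2)
        * derivWithin (fun s => β s / s ^ 2) I r = -4 * c) :
    ∃ b : ℝ, ∀ r ∈ I, 0 < c / (2 * r ^ 2) + b ∧ β r = r ^ 2 * (c / (2 * r ^ 2) + b) ^ 4 := by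
  rcases Set.eq_empty_or_nonempty I with hIe | ⟨r0, hr0⟩
  · exact ⟨0, by simp [hIe]⟩
  set g : ℝ → ℝ := fun r => (β r / r ^ 2) ^ ((1 : ℝ)/4) with hg
  set h : ℝ → ℝ := fun r => g r - c / (2 * r ^ 2) with hh
  have key : ∀ r ∈ I, HasDerivWithinAt h 0 I r := by
    intro r hr
    have hrpos : 0 < r := hIsub hr
    have hP : 0 < β r := hβpos r hr
    have hq : 0 < β r / r ^ 2 := div_pos hP (by positivity)
    have hdiffq : DifferentiableWithinAt ℝ (fun s => β s / s ^ 2) I r :=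
      (hβdiff r hr).div ((differentiable_pow 2).differentiableAt.differentiableWithinAt)
        (by positivity)
    set d := derivWithin (fun s => β s / s ^ 2) I r with hdd
    have hdq : HasDerivWithinAt (fun s => β s / s ^ 2) d I r := hdiffq.hasDerivWithinAt
    set A := β r ^ (-(3 : ℝ) / 4) with hA
    set B := r ^ ((9 : ℝ) / 2) with hB
    have hApos : 0 < A := Real.rpow_pos_of_pos hP _
    have hBpos : 0 < B := Real.rpow_pos_of_pos hrpos _
    have hd : d = -4 * c / (A * B) := by
      rw [eq_div_iff (by positivity)]
      linear_combination hode r hr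
    have hgd : HasDerivWithinAt g (d * (1/4) * (β r / r ^ 2) ^ ((1:ℝ)/4 - 1)) I r :=
      hdq.rpow_const (Or.inl hq.ne')
    have hkd : HasDerivAt (fun s : ℝ => c / (2 * s ^ 2))
        ((0 * (2 * r ^ 2) - c * (2 * (↑2 * r ^ (2 - 1)))) / (2 * r ^ 2) ^ 2) r :=
      (hasDerivAt_const r c).div ((hasDerivAt_pow 2 r).const_mul 2) (by positivity)
    have hhd := hgd.sub (hkd.hasDerivWithinAt)
    convert hhd using 1 <;> try rfl
    -- show 0 equals the derivative value
    set t := r ^ ((3 : ℝ)/2) with ht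
    have htpos : 0 < t := Real.rpow_pos_of_pos hrpos _
    have hBt : B = r ^ 3 * t := by
      rw [hB, ht, ← Real.rpow_natCast r 3, ← Real.rpow_add hrpos]
      norm_num
    have hqr : (β r / r ^ 2) ^ ((1:ℝ)/4 - 1) = A * t := by
      have h1 : ((1:ℝ)/4 - 1) = -(3:ℝ)/4 := by norm_num
      rw [h1, Real.div_rpow hP.le (by positivity)]
      have h2 : (r ^ 2 : ℝ) ^ (-(3:ℝ)/4) = r ^ (-(3:ℝ)/2) := by
        rw [← Real.rpow_natCast r 2, ← Real.rpow_mul hrpos.le]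
        norm_num
      have h3 : r ^ (-(3:ℝ)/2) = t⁻¹ := by
        rw [ht, show (-(3:ℝ)/2) = -((3:ℝ)/2) by norm_num, Real.rpow_neg hrpos.le]
      rw [h2, h3, hA]; field_simp
    rw [hqr, hd, hBt]
    field_simp
    ring
  have hconst : ∀ r ∈ I, h r = h r0 := by
    intro r hr
    have := Convex.norm_image_sub_le_of_norm_hasDerivWithin_le (f := h) (f' := fun _ => 0) (C := 0)
      key (fun x _ => by simp) (convex_iff_ordConnected.mpr hI) hr0 hr
    simp only [zero_mul] at this
    exact sub_eq_zero.mp (norm_le_zero_iff.mp this)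
  refine ⟨h r0, fun r hr => ?_⟩
  have hrpos : 0 < r := hIsub hr
  have hP : 0 < β r := hβpos r hr
  have hq : 0 < β r / r ^ 2 := div_pos hP (by positivity)
  have hgr : g r = c / (2 * r ^ 2) + h r0 := by
    have := hconst r hr
    simp only [hh] at this
    linarith [this]
  have hgpos : 0 < g r := Real.rpow_pos_of_pos hq _
  refine ⟨hgr ▸ hgpos, ?_⟩
  rw [← hgr]
  have : g r ^ 4 = β r / r ^ 2 := by
    rw [hg]
    rw [← Real.rpow_natCast ((β r / r ^ 2) ^ ((1:ℝ)/4)) 4, ← Real.rpow_mul hq.le]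
    norm_num
  rw [this]
  field_simp
end

section
/- Let I ⊆ ℝ be an open interval and f : I → ℝ a twice differentiable function satisfying f''(ψ) + 2·f'(ψ)² = exp(−2f(ψ)) for all ψ ∈ I. Then there exist real constants a and b such that exp(2f(ψ)) = ψ² + a·ψ + b for all ψ ∈ I. -/
/-- A function with zero derivative on an open convex subset of `ℝ` is constant there. -/
lemma const_of_hasDerivAt_zero' (I : Set ℝ) (hIopen : IsOpen I) (hconv : Convex ℝ I)
    (k : ℝ → ℝ) (h : ∀ x ∈ I, HasDerivAt k 0 x) {x y : ℝ} (hx : x ∈ I) (hy : y ∈ I) :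
    k x = k y := by
  apply hconv.is_const_of_fderivWithin_eq_zero
    (fun z hz => (h z hz).differentiableAt.differentiableWithinAt) _ hx hy
  intro z hz
  rw [fderivWithin_of_isOpen hIopen hz, (h z hz).hasFDerivAt.fderiv]
  ext
  simp

/-- If `f` is twice differentiable on an open interval `I` and satisfies
`f'' + 2 f'² = exp(−2f)` there, then `exp(2f(ψ)) = ψ² + aψ + b` on `I` for some
real constants `a`, `b` (the fixing of the functional relation `e^{2U} = b + aΨ + Ψ²`
in Section 5 of the paper). -/
theorem exp_two_f_is_quadratic
    (I : Set ℝ) (hIopen : IsOpen I) (hIconn : I.OrdConnected)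
    (f : ℝ → ℝ)
    (hf : ∀ ψ ∈ I, DifferentiableAt ℝ f ψ)
    (hf' : ∀ ψ ∈ I, DifferentiableAt ℝ (deriv f) ψ)
    (hode : ∀ ψ ∈ I, deriv (deriv f) ψ + 2 * (deriv f ψ) ^ 2 = Real.exp (-2 * f ψ)) :
    ∃ a b : ℝ, ∀ ψ ∈ I, Real.exp (2 * f ψ) = ψ ^ 2 + a * ψ + b := by
  rcases I.eq_empty_or_nonempty with rfl | ⟨x₀, hx₀⟩
  · exact ⟨0, 0, fun ψ h => h.elim⟩
  have hconv : Convex ℝ I := hIconn.convex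
  set g : ℝ → ℝ := fun ψ => Real.exp (2 * f ψ) with hg
  set G : ℝ → ℝ := fun ψ => Real.exp (2 * f ψ) * (2 * deriv f ψ) with hG
  have hgderiv : ∀ ψ ∈ I, HasDerivAt g (G ψ) ψ := by
    intro ψ hψ
    exact (((hf ψ hψ).hasDerivAt.const_mul 2).exp)
  have hGderiv : ∀ ψ ∈ I, HasDerivAt G 2 ψ := by
    intro ψ hψ
    have h1 : HasDerivAt (fun ψ => Real.exp (2 * f ψ))
        (Real.exp (2 * f ψ) * (2 * deriv f ψ)) ψ :=
      ((hf ψ hψ).hasDerivAt.const_mul 2).exp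
    have h2 : HasDerivAt (fun ψ => 2 * deriv f ψ) (2 * deriv (deriv f) ψ) ψ :=
      (hf' ψ hψ).hasDerivAt.const_mul 2
    have h3 := h1.mul h2
    convert h3 using 1 <;> try rfl
    have hode' := hode ψ hψ
    have hexp : Real.exp (2 * f ψ) * Real.exp (-2 * f ψ) = 1 := by
      rw [← Real.exp_add]; ring_nf; exact Real.exp_zero
    have : Real.exp (2 * f ψ) * (deriv (deriv f) ψ + 2 * (deriv f ψ) ^ 2)
        = Real.exp (2 * f ψ) * Real.exp (-2 * f ψ) := by rw [hode']
    rw [hexp] at this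
    nlinarith [this]
  set a : ℝ := G x₀ - 2 * x₀ with ha
  have hGa : ∀ ψ ∈ I, G ψ = 2 * ψ + a := by
    intro ψ hψ
    have := const_of_hasDerivAt_zero' I hIopen hconv (fun ψ => G ψ - 2 * ψ)
      (fun x hx => by convert (hGderiv x hx).sub ((hasDerivAt_id x).const_mul 2) using 1 <;> first | rfl | simp)
      hψ hx₀
    simp only [ha] at this ⊢
    linarith
  set b : ℝ := g x₀ - (x₀ ^ 2 + a * x₀) with hb
  refine ⟨a, b, fun ψ hψ => ?_⟩
  have := const_of_hasDerivAt_zero' I hIopen hconv (fun ψ => g ψ - (ψ ^ 2 + a * ψ))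
    (fun x hx => by
      have h1 := (hgderiv x hx).sub
        (((hasDerivAt_pow 2 x).add ((hasDerivAt_id x).const_mul a)))
      convert h1 using 1 <;> try rfl
      rw [hGa x hx]; ring)
    hψ hx₀
  simp only [hb] at this ⊢
  have : g ψ = ψ ^ 2 + a * ψ + b := by simp only [hb]; linarith
  simpa [hg] using this
end

section
/- Let A, B, c, ε be real numbers with A·B < 0, A + B ≠ 0, c² > 1 and ε² = 1. Set k = 4·√(|AB|(c² − 1)), a₀ = 2·√(c² − 1), Q = ε/(4|AB|·√(c² − 1)) and M = (B − A)/(8|AB|^{3/2}·√(c² − 1)). Let I ⊆ (0,∞) be an interval on which 1 − kBr > 0 and 1 + kAr > 0, and define R(r) = √((1 − kBr)/(1 + kAr)). Then for every r ∈ I: (i) (R(r)² − 1)² = 4|AB|·a₀²·(A·R(r)² + B)²·r²; (ii) a₀²·R(r)²·(A + B)² = 4|AB|(c² − 1)·(R(r)² − 1)²·(1 − 2M/r + Q²/r²); (iii) R'(r)²·(R(r)² − 1)²·(1 − 2M/r + Q²/r²) = a₀²·(A·R(r)² + B)⁴. -/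
set_option maxHeartbeats 800000

/-- The coordinate change of case (ii) of Section 5.2 of the paper (`AB < 0`,
spherical surfaces, `A + B ≠ 0`) brings the conformastat electrovacuum metric to the
exterior Reissner–Nordström form: with `R(r) = √((1 − kBr)/(1 + kAr))`, identity (i)
matches the angular coefficient, (ii) the time-time coefficient and (iii) the radial
coefficient. -/
theorem reissner_nordstrom_coordinate_change
    (A B c ε : ℝ) (hAB : A * B < 0) (hABsum : A + B ≠ 0)
    (hc : 1 < c ^ 2) (hε : ε ^ 2 = 1)
    (k a₀ Q M : ℝ)
    (hk : k = 4 * Real.sqrt (|A * B| * (c ^ 2 - 1)))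
    (ha₀ : a₀ = 2 * Real.sqrt (c ^ 2 - 1))
    (hQ : Q = ε / (4 * |A * B| * Real.sqrt (c ^ 2 - 1)))
    (hM : M = (B - A) / (8 * |A * B| ^ ((3 : ℝ) / 2) * Real.sqrt (c ^ 2 - 1)))
    (I : Set ℝ) (hIint : I.OrdConnected) (hIsub : I ⊆ Set.Ioi 0)
    (hcond : ∀ r ∈ I, 0 < 1 - k * B * r ∧ 0 < 1 + k * A * r)
    (R : ℝ → ℝ) (hR : ∀ r, R r = Real.sqrt ((1 - k * B * r) / (1 + k * A * r))) :
    ∀ r ∈ I,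
      ((R r ^ 2 - 1) ^ 2 = 4 * |A * B| * a₀ ^ 2 * (A * R r ^ 2 + B) ^ 2 * r ^ 2) ∧
      (a₀ ^ 2 * R r ^ 2 * (A + B) ^ 2
        = 4 * |A * B| * (c ^ 2 - 1) * (R r ^ 2 - 1) ^ 2
          * (1 - 2 * M / r + Q ^ 2 / r ^ 2)) ∧
      ((deriv R r) ^ 2 * (R r ^ 2 - 1) ^ 2 * (1 - 2 * M / r + Q ^ 2 / r ^ 2)
        = a₀ ^ 2 * (A * R r ^ 2 + B) ^ 4) := by
  intro r hr
  obtain ⟨hu, hv⟩ := hcond r hr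
  have hrpos : (0:ℝ) < r := hIsub hr
  have hA : A ≠ 0 := by
    intro h; rw [h] at hAB; simp at hAB
  have habpos : 0 < |A * B| := abs_pos.2 (ne_of_lt hAB)
  have hc1 : (0:ℝ) < c ^ 2 - 1 := by linarith
  obtain ⟨s, hspos, hs2⟩ : ∃ s : ℝ, 0 < s ∧ s ^ 2 = c ^ 2 - 1 :=
    ⟨Real.sqrt (c ^ 2 - 1), Real.sqrt_pos.2 hc1, Real.sq_sqrt hc1.le⟩
  obtain ⟨t, htpos, ht2⟩ : ∃ t : ℝ, 0 < t ∧ t ^ 2 = |A * B| :=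
    ⟨Real.sqrt |A * B|, Real.sqrt_pos.2 habpos, Real.sq_sqrt habpos.le⟩
  have hsqs : Real.sqrt (c ^ 2 - 1) = s := by
    rw [← hs2, Real.sqrt_sq hspos.le]
  have hsqt : Real.sqrt |A * B| = t := by
    rw [← ht2, Real.sqrt_sq htpos.le]
  have hABt : A * B = -t ^ 2 := by
    rw [ht2, abs_of_neg hAB]; ring
  have hk4 : k = 4 * (t * s) := by
    rw [hk, Real.sqrt_mul (abs_nonneg _), hsqt, hsqs]
  have ha2 : a₀ = 2 * s := by rw [ha₀, hsqs]
  have hpow : |A * B| ^ ((3 : ℝ) / 2) = t ^ 3 := by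
    rw [← ht2, ← Real.rpow_natCast t 2, ← Real.rpow_mul htpos.le,
      ← Real.rpow_natCast t 3]
    norm_num
  have hM3 : M = (B - A) / (8 * t ^ 3 * s) := by rw [hM, hpow, hsqs]
  have hQ2 : Q ^ 2 = 1 / (16 * t ^ 4 * s ^ 2) := by
    rw [hQ, hsqs, div_pow, hε, ← ht2]
    field_simp
    ring
  subst hk4 ha2
  have hune : (1 - 4 * (t * s) * B * r) ≠ 0 := hu.ne'
  have hvne : (1 + 4 * (t * s) * A * r) ≠ 0 := hv.ne'
  have hgpos : 0 < (1 - 4 * (t * s) * B * r) / (1 + 4 * (t * s) * A * r) :=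
    div_pos hu hv
  have hRsq : R r ^ 2 =
      (1 - 4 * (t * s) * B * r) / (1 + 4 * (t * s) * A * r) := by
    rw [hR]; exact Real.sq_sqrt hgpos.le
  -- the key factorization of the Reissner–Nordström factor
  have key : (1 - 4 * (t * s) * B * r) * (1 + 4 * (t * s) * A * r)
      = 16 * t ^ 4 * s ^ 2 * r ^ 2 - 4 * (t * s) * (B - A) * r + 1 := by
    linear_combination (-16 * t ^ 2 * s ^ 2 * r ^ 2) * hABt
  have hF : 1 - 2 * M / r + Q ^ 2 / r ^ 2
      = ((1 - 4 * (t * s) * B * r) * (1 + 4 * (t * s) * A * r))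
        / (16 * t ^ 4 * s ^ 2 * r ^ 2) := by
    rw [hM3, hQ2, key]
    field_simp
    ring
  -- the derivative of R
  have h1 : HasDerivAt (fun x : ℝ => 1 - 4 * (t * s) * B * x)
      (-(4 * (t * s) * B)) r := by
    simpa using ((hasDerivAt_id r).const_mul (4 * (t * s) * B)).const_sub 1
  have h2 : HasDerivAt (fun x : ℝ => 1 + 4 * (t * s) * A * x)
      (4 * (t * s) * A) r := by
    simpa using (((hasDerivAt_id r).const_mul (4 * (t * s) * A)).const_add 1)
  have hg : HasDerivAt
      (fun x : ℝ => (1 - 4 * (t * s) * B * x) / (1 + 4 * (t * s) * A * x))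
      ((-(4 * (t * s) * B) * (1 + 4 * (t * s) * A * r)
        - (1 - 4 * (t * s) * B * r) * (4 * (t * s) * A))
        / (1 + 4 * (t * s) * A * r) ^ 2) r := h1.div h2 hvne
  have hRfun : R = fun x : ℝ =>
      Real.sqrt ((1 - 4 * (t * s) * B * x) / (1 + 4 * (t * s) * A * x)) :=
    funext hR
  have hd : HasDerivAt R
      (1 / (2 * Real.sqrt ((1 - 4 * (t * s) * B * r) / (1 + 4 * (t * s) * A * r)))
        * ((-(4 * (t * s) * B) * (1 + 4 * (t * s) * A * r)
          - (1 - 4 * (t * s) * B * r) * (4 * (t * s) * A))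
          / (1 + 4 * (t * s) * A * r) ^ 2)) r := by
    rw [hRfun]
    exact (Real.hasDerivAt_sqrt hgpos.ne').comp r hg
  have hsqrtsq : Real.sqrt ((1 - 4 * (t * s) * B * r)
      / (1 + 4 * (t * s) * A * r)) ^ 2 =
      (1 - 4 * (t * s) * B * r) / (1 + 4 * (t * s) * A * r) :=
    Real.sq_sqrt hgpos.le
  have hDsq : (deriv R r) ^ 2 =
      (4 * (t * s)) ^ 2 * (A + B) ^ 2
        / (4 * (1 + 4 * (t * s) * A * r) ^ 3 * (1 - 4 * (t * s) * B * r)) := by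
    rw [hd.deriv]
    have e1 : ∀ S G : ℝ, (1 / (2 * S) * G) ^ 2 = 1 / (4 * S ^ 2) * G ^ 2 := by
      intro S G; ring
    rw [e1, hsqrtsq]
    field_simp
    ring
  have hvne' : 1 + 4 * t * s * r * A ≠ 0 := by
    intro h; apply hvne; linear_combination h
  have hune' : 1 - 4 * t * s * B * r ≠ 0 := by
    intro h; apply hune; linear_combination h
  refine ⟨?_, ?_, ?_⟩
  · rw [hRsq, ← ht2]
    field_simp
    ring
  · rw [hRsq, ← ht2, ← hs2, hF]
    rw [div_sub_one hvne]
    field_simp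
    ring
  · rw [hDsq, hRsq, hF]
    rw [div_sub_one hvne, mul_div_assoc' A, div_add' _ _ _ hvne]
    field_simp
    ring
end

section
/- Let A, B, c, ε be real numbers with A·B > 0, c² > 1 and ε² = 1. Set k = 4·√(AB(c² − 1)), a₀ = 2·√(c² − 1), Q = ε/(4AB·√(c² − 1)) and M = (B − A)/(8(AB)^{3/2}·√(c² − 1)). Let I ⊆ (0,∞) be an interval on which 1 − kBr > 0 and 1 + kAr > 0, and define R(r) = √((1 − kBr)/(1 + kAr)). Then for every r ∈ I: (i) (R(r)² − 1)² = 4AB·a₀²·(A·R(r)² + B)²·r²; (ii) a₀²·R(r)²·(A + B)² = 4AB(c² − 1)·(R(r)² − 1)²·(−1 − 2M/r + Q²/r²); (iii) R'(r)²·(R(r)² − 1)²·(−1 − 2M/r + Q²/r²) = a₀²·(A·R(r)² + B)⁴. -/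
/-- The coordinate change of case (iii) of Section 5.2 of the paper (`AB > 0`,
hyperbolic surfaces) brings the conformastat electrovacuum metric to the hyperbolic
counterpart of the Reissner–Nordström form: with `R(r) = √((1 − kBr)/(1 + kAr))`,
identity (i) matches the angular coefficient, (ii) the time-time coefficient and
(iii) the radial coefficient. -/
theorem hyperbolic_reissner_nordstrom_coordinate_change
    (A B c ε : ℝ) (hAB : 0 < A * B)
    (hc : 1 < c ^ 2) (hε : ε ^ 2 = 1)
    (k a₀ Q M : ℝ)
    (hk : k = 4 * Real.sqrt (A * B * (c ^ 2 - 1)))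
    (ha₀ : a₀ = 2 * Real.sqrt (c ^ 2 - 1))
    (hQ : Q = ε / (4 * A * B * Real.sqrt (c ^ 2 - 1)))
    (hM : M = (B - A) / (8 * (A * B) ^ ((3 : ℝ) / 2) * Real.sqrt (c ^ 2 - 1)))
    (I : Set ℝ) (hIint : I.OrdConnected) (hIsub : I ⊆ Set.Ioi 0)
    (hcond : ∀ r ∈ I, 0 < 1 - k * B * r ∧ 0 < 1 + k * A * r)
    (R : ℝ → ℝ) (hR : ∀ r, R r = Real.sqrt ((1 - k * B * r) / (1 + k * A * r))) :
    ∀ r ∈ I,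
      ((R r ^ 2 - 1) ^ 2 = 4 * (A * B) * a₀ ^ 2 * (A * R r ^ 2 + B) ^ 2 * r ^ 2) ∧
      (a₀ ^ 2 * R r ^ 2 * (A + B) ^ 2
        = 4 * (A * B) * (c ^ 2 - 1) * (R r ^ 2 - 1) ^ 2
          * (-1 - 2 * M / r + Q ^ 2 / r ^ 2)) ∧
      ((deriv R r) ^ 2 * (R r ^ 2 - 1) ^ 2 * (-1 - 2 * M / r + Q ^ 2 / r ^ 2)
        = a₀ ^ 2 * (A * R r ^ 2 + B) ^ 4) := by
  have ht1 : (0:ℝ) < c ^ 2 - 1 := by linarith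
  set t := Real.sqrt (c ^ 2 - 1) with htdef
  have ht : t ^ 2 = c ^ 2 - 1 := Real.sq_sqrt ht1.le
  have ht0 : 0 < t := Real.sqrt_pos.mpr ht1
  set w := Real.sqrt (A * B) with hwdef
  have hw : w ^ 2 = A * B := Real.sq_sqrt hAB.le
  have hw0 : 0 < w := Real.sqrt_pos.mpr hAB
  have hkwt : k = 4 * (w * t) := by rw [hk, Real.sqrt_mul hAB.le]
  subst hkwt
  have hrpow : (A * B) ^ ((3 : ℝ) / 2) = w ^ 3 := by
    rw [hwdef, Real.sqrt_eq_rpow, ← Real.rpow_natCast ((A*B) ^ ((1:ℝ)/2)) 3,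
      ← Real.rpow_mul hAB.le]
    norm_num
  have hM' : M = (B - A) / (8 * w ^ 3 * t) := by rw [hM, hrpow]
  have hQ' : Q = ε / (4 * w ^ 2 * t) := by
    rw [hQ]; congr 1; linear_combination (-4 * t) * hw
  intro r hr
  obtain ⟨hu, hv⟩ := hcond r hr
  have hr0 : 0 < r := hIsub hr
  have hr2 : R r ^ 2 = (1 - 4 * (w * t) * B * r) / (1 + 4 * (w * t) * A * r) := by
    rw [hR r]; exact Real.sq_sqrt (div_nonneg hu.le hv.le)
  have key : R r ^ 2 * (1 + 4 * (w * t) * A * r) = 1 - 4 * (w * t) * B * r := by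
    rw [hr2]; exact div_mul_cancel₀ _ hv.ne'
  have hs0 : 0 < R r := by rw [hR r]; exact Real.sqrt_pos.mpr (div_pos hu hv)
  have h1 : R r ^ 2 - 1 = -(4 * (w * t) * r * (A * R r ^ 2 + B)) := by
    linear_combination key
  have h2 : A + B = (1 + 4 * (w * t) * A * r) * (A * R r ^ 2 + B) := by
    linear_combination (-A) * key
  have hF : (-1 - 2 * M / r + Q ^ 2 / r ^ 2)
      = (1 - 4 * (w * t) * B * r) * (1 + 4 * (w * t) * A * r)
        / (16 * w ^ 4 * t ^ 2 * r ^ 2) := by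
    rw [hM', hQ', div_pow, hε]
    field_simp
    linear_combination (-2048 * w ^ 2 * t ^ 2 * r ^ 2) * hw
  -- derivative of R
  have h1d : HasDerivAt (fun x : ℝ => 1 - 4 * (w * t) * B * x) (-(4 * (w * t) * B)) r := by
    simpa using ((hasDerivAt_id r).const_mul (4 * (w * t) * B)).const_sub 1
  have h2d : HasDerivAt (fun x : ℝ => 1 + 4 * (w * t) * A * x) (4 * (w * t) * A) r := by
    simpa using ((hasDerivAt_id r).const_mul (4 * (w * t) * A)).const_add 1
  have hdiv := h1d.div h2d hv.ne'
  have hne : (1 - 4 * (w * t) * B * r) / (1 + 4 * (w * t) * A * r) ≠ 0 :=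
    (div_pos hu hv).ne'
  have hsq := hdiv.sqrt hne
  have hRef : R = fun x =>
      Real.sqrt ((1 - 4 * (w * t) * B * x) / (1 + 4 * (w * t) * A * x)) := funext hR
  have hder : deriv R r
      = -(4 * (w * t) * (A + B)) / ((1 + 4 * (w * t) * A * r) ^ 2 * (2 * R r)) := by
    have hsqd := hsq.deriv
    simp only [Pi.div_apply] at hsqd
    rw [hRef, hsqd, ← hRef, hR r]
    field_simp
    ring
  refine ⟨?_, ?_, ?_⟩
  · rw [h1, ha₀, ← hw]; ring
  · rw [hF, h1, ha₀, ← ht, ← hw, ← key, h2]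
    field_simp
    ring
  · rw [hder, hF, h1, h2, ← key, ha₀]
    field_simp [hv.ne', hs0.ne', hr0.ne', ht0.ne', hw0.ne',
      (show (1 + 4 * w * t * A * r) ≠ 0 by rw [mul_assoc 4 w t]; exact hv.ne')]
    ring
end

section
/- Let A ∈ ℂ with A ≠ 0, let c be real with c² < 1 and ε real with ε² = 1, and define Q = ε/(4·A·conj(A)·√(1 − c²)) and M = i·(A − conj(A))/(8·(A·conj(A))^{3/2}·√(1 − c²)). Then M is a real number and 4·A·conj(A)·(M² − Q²) = −(A + conj(A))²·Q². In particular M² ≤ Q², with equality if and only if Re A = 0. -/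
open Complex ComplexConjugate
open scoped ComplexOrder

/-- The parameter relation of the case `c² < 1` of Section 5.3 of the paper:
`M` is real and `4·A·conj A·(M² − Q²) = −(A + conj A)²·Q²`; in particular `M² ≤ Q²`,
with equality iff `Re A = 0`. -/
theorem case_clt1_parameter_relation
    (A : ℂ) (hA : A ≠ 0) (c ε : ℝ) (hc : c ^ 2 < 1) (hε : ε ^ 2 = 1)
    (Q M : ℂ)
    (hQ : Q = (ε : ℂ) / (4 * A * conj A * (Real.sqrt (1 - c ^ 2) : ℂ)))
    (hM : M = Complex.I * (A - conj A)
      / (8 * (A * conj A) ^ ((3 : ℂ) / 2) * (Real.sqrt (1 - c ^ 2) : ℂ))) :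
    M.im = 0 ∧
    4 * A * conj A * (M ^ 2 - Q ^ 2) = -(A + conj A) ^ 2 * Q ^ 2 ∧
    M ^ 2 ≤ Q ^ 2 ∧
    (M ^ 2 = Q ^ 2 ↔ A.re = 0) := by
  set s := Real.sqrt (1 - c ^ 2) with hs
  have hspos : 0 < s := Real.sqrt_pos.2 (by linarith)
  set b := ‖A‖ with hbdef
  have hbpos : 0 < b := norm_pos_iff.2 hA
  have hb2 : b ^ 2 = A.re ^ 2 + A.im ^ 2 := by
    rw [hbdef, Complex.sq_norm, Complex.normSq_apply]; ring
  have h1 : A * conj A = ((b ^ 2 : ℝ) : ℂ) := by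
    rw [Complex.mul_conj, ← Complex.sq_norm]
  have h3 : (b ^ 2 : ℝ) ^ (3 / 2 : ℝ) = b ^ 3 := by
    rw [← Real.rpow_natCast b 2, ← Real.rpow_mul hbpos.le, ← Real.rpow_natCast b 3]
    norm_num
  have hpow : (A * conj A) ^ ((3 : ℂ) / 2) = ((b ^ 3 : ℝ) : ℂ) := by
    have h2 : ((3 : ℂ) / 2) = ((3 / 2 : ℝ) : ℂ) := by norm_num
    rw [h1, h2, ← Complex.ofReal_cpow (by positivity), h3]
  have hQ' : Q = ((ε / (4 * b ^ 2 * s) : ℝ) : ℂ) := by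
    rw [hQ, show (4 : ℂ) * A * conj A = 4 * ((b ^ 2 : ℝ) : ℂ) from by rw [mul_assoc, h1]]
    push_cast; ring
  have hbne : b ≠ 0 := hbpos.ne'
  have hsne : s ≠ 0 := hspos.ne'
  have hbneC : ((b : ℂ)) ≠ 0 := by exact_mod_cast hbne
  have hsneC : ((s : ℂ)) ≠ 0 := by exact_mod_cast hsne
  have hM' : M = ((-A.im / (4 * b ^ 3 * s) : ℝ) : ℂ) := by
    rw [hM, hpow, Complex.sub_conj]
    push_cast
    field_simp
    ring_nf
    simp [Complex.I_sq]
  have key2 : (ε / (4 * b ^ 2 * s)) ^ 2 - (-A.im / (4 * b ^ 3 * s)) ^ 2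
      = A.re ^ 2 / (16 * b ^ 6 * s ^ 2) := by
    field_simp
    linear_combination (16 * b ^ 2) * hε + 16 * hb2
  have hdiff : Q ^ 2 - M ^ 2 = ((A.re ^ 2 / (16 * b ^ 6 * s ^ 2) : ℝ) : ℂ) := by
    rw [hM', hQ']; exact_mod_cast key2
  refine ⟨by rw [hM']; exact Complex.ofReal_im _, ?_, ?_, ?_⟩
  · rw [show (4 : ℂ) * A * conj A = 4 * ((b ^ 2 : ℝ) : ℂ) from by rw [mul_assoc, h1],
      hM', hQ', Complex.add_conj]
    have key : 4 * b ^ 2 * ((-A.im / (4 * b ^ 3 * s)) ^ 2 - (ε / (4 * b ^ 2 * s)) ^ 2)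
        = -(2 * A.re) ^ 2 * (ε / (4 * b ^ 2 * s)) ^ 2 := by
      field_simp
      linear_combination (4 * A.re ^ 2 - 4 * b ^ 2) * hε
        - 4 * hb2
    exact_mod_cast key
  · rw [← sub_nonneg, hdiff]
    exact_mod_cast Complex.zero_le_real.2 (by positivity)
  · rw [show (M ^ 2 = Q ^ 2) ↔ (Q ^ 2 - M ^ 2 = 0) from by rw [sub_eq_zero, eq_comm],
      hdiff, Complex.ofReal_eq_zero, div_eq_zero_iff]
    constructor
    · intro h
      have h' := h.resolve_right (by positivity)
      exact pow_eq_zero_iff (n := 2) (by norm_num) |>.mp h'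
    · intro h; left; rw [h]; ring
end
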